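/- (Pocklington's lemma) If x and y are nonzero integers, then x^4 + 18 x^2 y^2 + y^4 is not a perfect square; i.e., the Diophantine equation x^4 + 18 x^2 y^2 + y^4 = z^2 has no integer solutions with xy ≠ 0. -/

import Mathlib

set_option maxHeartbeats 1000000

private lemma sq_mod32 (w : ℤ) : w^2 % 32 = 0 ∨ w^2 % 32 = 1 ∨ w^2 % 32 = 4 ∨
    w^2 % 32 = 9 ∨ w^2 % 32 = 16 ∨ w^2 % 32 = 17 ∨ w^2 % 32 = 25 := by
  obtain ⟨q, r, hr0, hr16, rfl⟩ : ∃ q r : ℤ, 0 ≤ r ∧ r < 16 ∧ w = 16*q + r :=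
    ⟨w / 16, w % 16, Int.emod_nonneg _ (by norm_num), Int.emod_lt_of_pos _ (by norm_num),
      by rw [Int.mul_ediv_add_emod]⟩
  have key : (16*q+r)^2 % 32 = r^2 % 32 := by
    rw [show (16*q+r)^2 = r^2 + 32*(8*q^2+r*q) by ring, Int.add_mul_emod_self_left]
  rw [key]
  interval_cases r <;> norm_num

private lemma odd_sq8 {w : ℤ} (h : w % 2 = 1) : w^2 % 8 = 1 := by
  obtain ⟨q, r, hr, rfl⟩ : ∃ q r : ℤ, (r = 1 ∨ r = 3) ∧ w = 4*q + r :=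
    ⟨w / 4, w % 4, by omega, by rw [Int.mul_ediv_add_emod]⟩
  rcases hr with rfl | rfl
  · rw [show (4*q+1)^2 = 1 + 8*(2*q^2+q) by ring, Int.add_mul_emod_self_left]; norm_num
  · rw [show (4*q+3)^2 = 1 + 8*(2*q^2+3*q+1) by ring, Int.add_mul_emod_self_left]; norm_num

private lemma even_sq4 {w : ℤ} (h : w % 2 = 0) : w^2 % 4 = 0 := by
  obtain ⟨q, rfl⟩ : ∃ q : ℤ, w = 2*q := ⟨w / 2, by omega⟩
  rw [show (2*q)^2 = 0 + 4*q^2 by ring, Int.add_mul_emod_self_left]; norm_num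

private lemma odd_factor {a b : ℤ} (h : (a*b) % 2 = 1) : a % 2 = 1 ∧ b % 2 = 1 := by
  rcases Int.even_or_odd a with ha | ha
  · exfalso; have : Even (a*b) := ha.mul_right b
    rw [Int.even_iff] at this; omega
  · rcases Int.even_or_odd b with hb | hb
    · exfalso; have : Even (a*b) := hb.mul_left a
      rw [Int.even_iff] at this; omega
    · rw [Int.odd_iff] at ha hb; exact ⟨ha, hb⟩

private lemma even_factor {c d : ℤ} (h : (c*d) % 2 = 0) (hc : c % 2 = 1) : d % 2 = 0 := by
  rcases Int.even_or_odd d with hd | hd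
  · rwa [Int.even_iff] at hd
  · exfalso
    have hco : Odd c := Int.odd_iff.mpr hc
    have : Odd (c*d) := hco.mul hd
    rw [Int.odd_iff] at this; omega

-- the two–odd case contradiction
private lemma case_odd_odd {x y z : ℤ} (hx : x % 2 = 1) (hy : y % 2 = 1)
    (h : x ^ 4 + 18 * x ^ 2 * y ^ 2 + y ^ 4 = z ^ 2) : False := by
  obtain ⟨u, hu⟩ : ∃ u, x^2 = 8*u + 1 := ⟨x^2/8, by have := odd_sq8 hx; omega⟩
  obtain ⟨v, hv⟩ : ∃ v, y^2 = 8*v + 1 := ⟨y^2/8, by have := odd_sq8 hy; omega⟩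
  have hz32 : z^2 = 32*(2*u^2 + 36*u*v + 2*v^2 + 5*u + 5*v) + 20 := by
    linear_combination -h + (x^2 + 8*u + 1 + 18*y^2)*hu + (y^2 + 8*v + 1 + 18*(8*u+1))*hv
  have h32 := sq_mod32 z
  obtain ⟨Z, hZ⟩ : ∃ Z, z^2 = Z := ⟨_, rfl⟩
  rw [hZ] at h32 hz32
  omega

private lemma split4 {x y m n : ℤ} (hx : 0 < x) (hy : 0 < y) (hm : 0 < m) (hn : 0 < n)
    (h : x * y = m * n) :
    ∃ a b c d : ℤ, 0 < a ∧ 0 < b ∧ 0 < c ∧ 0 < d ∧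
      x = a * b ∧ y = c * d ∧ m = a * c ∧ n = b * d := by
  have hdvd : x ∣ m * n := ⟨y, h.symm⟩
  obtain ⟨a, b, ham, hbn, hab⟩ := exists_dvd_and_dvd_of_dvd_mul hdvd
  have ha0 : a ≠ 0 := by rintro rfl; rw [zero_mul] at hab; omega
  have hb0 : b ≠ 0 := by rintro rfl; rw [mul_zero] at hab; omega
  have hxab : x = |a| * |b| := by
    rw [← abs_mul, ← hab, abs_of_pos hx]
  obtain ⟨c, hc⟩ : |a| ∣ m := (abs_dvd _ _).mpr ham
  obtain ⟨d, hd⟩ : |b| ∣ n := (abs_dvd _ _).mpr hbn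
  have hapos : 0 < |a| := abs_pos.mpr ha0
  have hbpos : 0 < |b| := abs_pos.mpr hb0
  have hcpos : 0 < c := by
    by_contra h0
    push_neg at h0
    have : |a| * c ≤ 0 := mul_nonpos_iff.mpr (Or.inl ⟨le_of_lt hapos, h0⟩)
    linarith
  have hdpos : 0 < d := by
    by_contra h0
    push_neg at h0
    have : |b| * d ≤ 0 := mul_nonpos_iff.mpr (Or.inl ⟨le_of_lt hbpos, h0⟩)
    linarith
  refine ⟨|a|, |b|, c, d, hapos, hbpos, hcpos, hdpos, hxab, ?_, hc, hd⟩
  have h2 : x * y = x * (c * d) := by rw [h, hc, hd, hxab]; ring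
  exact mul_left_cancel₀ (ne_of_gt hx) h2

-- omega helpers
private lemma mod8_contra {A B C : ℤ} (h : A = 4*B + C) (hA : A % 8 = 1) (hB : B % 8 = 1)
    (hC : C % 8 = 1) : False := by omega

private lemma odd_ne_even {X Y K : ℤ} (hX : X % 8 = 1) (hY : Y % 4 = 0) (h : X + Y = 2*K) :
    False := by omega

private lemma mod4_contra {X Y M N : ℤ} (hX : X % 8 = 1) (hY : Y % 4 = 0) (hM : M % 4 = 0)
    (hN : N % 8 = 1) (h : X + Y = M - N) : False := by omega

private lemma key (x y z : ℤ) (hx : 0 < x) (hy : 0 < y) (hz : 0 < z)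
    (hxo : x % 2 = 1) (hye : y % 2 = 0) (hgcd : Int.gcd x y = 1)
    (heq : x ^ 4 + 18 * x ^ 2 * y ^ 2 + y ^ 4 = z ^ 2)
    (ih : ∀ x' y' z' : ℤ, z'.natAbs < z.natAbs → 0 < x' → 0 < y' → 0 < z' →
      x' ^ 4 + 18 * x' ^ 2 * y' ^ 2 + y' ^ 4 = z' ^ 2 → False) : False := by
  have hxy : IsCoprime x y := Int.isCoprime_iff_gcd_eq_one.mpr hgcd
  have hx8 : x^2 % 8 = 1 := odd_sq8 hxo
  have hy4 : y^2 % 4 = 0 := even_sq4 hye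
  -- the pythagorean triple
  have hPT : PythagoreanTriple (x^2 + y^2) (4*x*y) z := by
    have : (x^2+y^2) * (x^2+y^2) + (4*x*y) * (4*x*y) = z * z := by linear_combination heq
    exact this
  -- coprimality of the legs
  have h1 : IsCoprime (x^2+y^2) x := by
    have h' : IsCoprime (y^2 + x*x) x := (hxy.symm.pow_left (m := 2)).add_mul_left_left x
    have e : x^2 + y^2 = y^2 + x*x := by ring
    rwa [e]
  have h2 : IsCoprime (x^2+y^2) y := by
    have h' : IsCoprime (x^2 + y*y) y := (hxy.pow_left (m := 2)).add_mul_left_left y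
    have e : x^2 + y^2 = x^2 + y*y := by ring
    rwa [e]
  have hoddsum : ∃ k, x^2 + y^2 = 2*k + 1 := ⟨(x^2+y^2)/2, by omega⟩
  obtain ⟨k, hk⟩ := hoddsum
  have h4 : IsCoprime (x^2+y^2) (2:ℤ) := ⟨1, -k, by rw [hk]; ring⟩
  have hC : IsCoprime (x^2+y^2) (4*x*y) := by
    have : IsCoprime (x^2+y^2) (2*2*x*y) := ((h4.mul_right h4).mul_right h1).mul_right h2
    rwa [show (2:ℤ)*2*x*y = 4*x*y by ring] at this
  have hCg : Int.gcd (x^2+y^2) (4*x*y) = 1 := Int.isCoprime_iff_gcd_eq_one.mp hC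
  obtain ⟨m, n, hmn, hzpm, hgmn, hpar⟩ := PythagoreanTriple.coprime_classification.mp ⟨hPT, hCg⟩
  -- the odd leg must be x²+y²
  rcases hmn with ⟨h5, h6⟩ | ⟨h5, h6⟩
  swap
  · exact odd_ne_even (K := m*n) hx8 hy4 (by linear_combination h5)
  -- m odd, n even
  rcases hpar with ⟨hme, hno⟩ | ⟨hmo, hne⟩
  · exact mod4_contra hx8 hy4 (even_sq4 hme) (odd_sq8 hno) (by linear_combination h5)
  -- z = m² + n²
  rcases hzpm with hzeq | hzeq
  swap
  · exfalso; linarith [sq_nonneg m, sq_nonneg n]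
  -- make m, n positive
  have hmn0 : 0 < m * n := by linarith [mul_pos hx hy]
  obtain ⟨m, n, hm, hn, h5, h6, hgmn, hmo, hne, hzeq⟩ :
      ∃ m n : ℤ, 0 < m ∧ 0 < n ∧ x^2 + y^2 = m^2 - n^2 ∧ 2*(x*y) = m*n ∧
        Int.gcd m n = 1 ∧ m % 2 = 1 ∧ n % 2 = 0 ∧ z = m^2 + n^2 := by
    rcases lt_trichotomy m 0 with hmlt | hm0 | hmgt
    · refine ⟨-m, -n, by omega, ?_, by linear_combination h5, by linarith,
        by simpa [Int.gcd, Int.natAbs_neg] using hgmn, by omega, by omega,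
        by linear_combination hzeq⟩
      by_contra h0
      push_neg at h0
      have hnn : m*n ≤ 0 := mul_nonpos_iff.mpr (Or.inr ⟨le_of_lt hmlt, by linarith⟩)
      linarith
    · exfalso; rw [hm0] at hmn0; simp at hmn0
    · refine ⟨m, n, hmgt, ?_, h5, by linarith, hgmn, hmo, hne, hzeq⟩
      by_contra h0
      push_neg at h0
      have hnn : m*n ≤ 0 := mul_nonpos_iff.mpr (Or.inl ⟨le_of_lt hmgt, h0⟩)
      linarith
  -- step: write n = 2*n2
  obtain ⟨n2, rfl⟩ : ∃ k, n = 2*k := ⟨n/2, by omega⟩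
  have hn2 : 0 < n2 := by omega
  have hxymn : x*y = m*n2 := by
    have h' : (2:ℤ)*(x*y) = 2*(m*n2) := by linear_combination h6
    exact mul_left_cancel₀ two_ne_zero h'
  obtain ⟨a, b, c, d, ha, hb, hc, hd, hxab, hycd, hmac, hnbd⟩ := split4 hx hy hm hn2 hxymn
  -- parities
  obtain ⟨hao, hbo⟩ := odd_factor (by rw [← hxab]; exact hxo)
  obtain ⟨-, hco⟩ := odd_factor (a := a) (b := c) (by rw [← hmac]; exact hmo)
  have hde : d % 2 = 0 := even_factor (by rw [← hycd]; exact hye) hco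
  -- coprimality
  have hbc : IsCoprime b c :=
    (hxy.of_isCoprime_of_dvd_left ⟨a, by rw [hxab]; ring⟩).of_isCoprime_of_dvd_right
      ⟨d, by rw [hycd]⟩
  have had : IsCoprime a d :=
    (hxy.of_isCoprime_of_dvd_left ⟨b, by rw [hxab]⟩).of_isCoprime_of_dvd_right
      ⟨c, by rw [hycd]; ring⟩
  have hbd : IsCoprime b d :=
    (hxy.of_isCoprime_of_dvd_left ⟨a, by rw [hxab]; ring⟩).of_isCoprime_of_dvd_right
      ⟨c, by rw [hycd]; ring⟩
  subst hxab hycd hmac hnbd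
  -- the key algebraic identity
  have E : b^2*(a^2+4*d^2) = c^2*(a^2-d^2) := by linear_combination h5
  have hc2 : (c:ℤ)^2 ∣ b^2*(a^2+4*d^2) := ⟨a^2 - d^2, by linear_combination E⟩
  have hcb2 : IsCoprime ((c:ℤ)^2) (b^2) := hbc.symm.pow
  obtain ⟨e, he⟩ := hcb2.dvd_of_dvd_mul_left hc2
  have hE2 : b^2*e = a^2 - d^2 := by
    have h' : c^2*(b^2*e) = c^2*(a^2-d^2) := by linear_combination E - b^2*he
    exact mul_left_cancel₀ (pow_ne_zero 2 (ne_of_gt hc)) h'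
  have he_pos : 0 < e := by
    rcases le_or_gt e 0 with h0 | h0
    · exfalso
      have h1 : c^2*e ≤ 0 := mul_nonpos_of_nonneg_of_nonpos (sq_nonneg c) h0
      linarith [he, pow_pos ha 2, sq_nonneg d]
    · exact h0
  have h5a : e ∣ 5*a^2 := ⟨4*b^2 + c^2, by linear_combination he - 4*hE2⟩
  have h5d : e ∣ 5*d^2 := ⟨c^2 - b^2, by linear_combination hE2 + he⟩
  obtain ⟨u, v, huv⟩ := had.pow (m := 2) (n := 2)
  have he5 : e ∣ 5 := by
    have h5' : (5:ℤ) = u*(5*a^2) + v*(5*d^2) := by linear_combination -5*huv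
    rw [h5']
    exact dvd_add (Dvd.dvd.mul_left h5a u) (Dvd.dvd.mul_left h5d v)
  have he15 : e = 1 ∨ e = 5 := by
    have hle : e ≤ 5 := Int.le_of_dvd (by norm_num) he5
    interval_cases e <;> omega
  rcases he15 with rfl | rfl
  case inr =>
    -- e = 5 : contradiction mod 8
    have heq5 : a^2 = 4*b^2 + c^2 := by
      have h' : (5:ℤ)*a^2 = 5*(4*b^2+c^2) := by linear_combination he - 4*hE2
      exact mul_left_cancel₀ (by norm_num) h'
    exact mod8_contra heq5 (odd_sq8 hao) (odd_sq8 hbo) (odd_sq8 hco)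
  case inl =>
    -- e = 1 : descent
    have hPT2 : PythagoreanTriple b d a := by
      have h' : b*b + d*d = a*a := by linear_combination hE2
      exact h'
    have hgbd : Int.gcd b d = 1 := Int.isCoprime_iff_gcd_eq_one.mp hbd
    obtain ⟨s, t, hst, hapm, hgst, hparst⟩ :=
      PythagoreanTriple.coprime_classification.mp ⟨hPT2, hgbd⟩
    rcases hst with ⟨hb1, hd1⟩ | ⟨hb1, hd1⟩
    swap
    · have hb2 : b % 2 = 0 := by
        rw [hb1, show 2*s*t = 2*(s*t) by ring]; exact Int.mul_emod_right 2 _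
      omega
    rcases hapm with hae | hae
    swap
    · linarith [sq_nonneg s, sq_nonneg t]
    have hs0 : s ≠ 0 := by rintro rfl; rw [show (2:ℤ)*0*t = 0 by ring] at hd1; omega
    have ht0 : t ≠ 0 := by rintro rfl; rw [show (2:ℤ)*s*0 = 0 by ring] at hd1; omega
    have heqnew : |s|^4 + 18*|s|^2*|t|^2 + |t|^4 = c^2 := by
      have e1 : |s|^4 = s^4 := by rw [pow_abs]; exact abs_of_nonneg (by positivity)
      have e2 : |t|^4 = t^4 := by rw [pow_abs]; exact abs_of_nonneg (by positivity)
      rw [e1, e2, sq_abs, sq_abs]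
      linear_combination he - (a+s^2+t^2)*hae - (4*d+8*s*t)*hd1
    have hcz : c < z := by
      have h1 : c ≤ a*c := le_mul_of_one_le_left (le_of_lt hc) ha
      have h1ac : 1 ≤ a*c := by simpa using Int.add_one_le_of_lt (mul_pos ha hc)
      have h2 : a*c ≤ (a*c)^2 := le_self_pow₀ h1ac (by norm_num)
      have h3 : (0:ℤ) < 2*(b*d) := by linarith [mul_pos hb hd]
      linarith [h1, h2, pow_pos h3 2, hzeq]
    have hlt : c.natAbs < z.natAbs := by omega
    exact ih |s| |t| c hlt (abs_pos.mpr hs0) (abs_pos.mpr ht0) hc heqnew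

private lemma pock_aux : ∀ N : ℕ, ∀ x y z : ℤ, z.natAbs = N → 0 < x → 0 < y → 0 < z →
    x ^ 4 + 18 * x ^ 2 * y ^ 2 + y ^ 4 = z ^ 2 → False := by
  intro N
  induction N using Nat.strong_induction_on with
  | _ N ih =>
  intro x y z hN hx hy hz heq
  have ih' : ∀ x' y' z' : ℤ, z'.natAbs < z.natAbs → 0 < x' → 0 < y' → 0 < z' →
      x' ^ 4 + 18 * x' ^ 2 * y' ^ 2 + y' ^ 4 = z' ^ 2 → False := by
    intro x' y' z' hlt
    exact ih z'.natAbs (hN ▸ hlt) x' y' z' rfl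
  by_cases hg1 : Int.gcd x y = 1
  · -- coprime case: split on parities
    have hx2 := Int.emod_two_eq x
    have hy2 := Int.emod_two_eq y
    rcases hx2 with hx2 | hx2 <;> rcases hy2 with hy2 | hy2
    · -- both even : contradicts coprimality
      have h2 : (2:ℤ) ∣ Int.gcd x y := Int.dvd_coe_gcd (by omega) (by omega)
      rw [hg1] at h2
      norm_num at h2
    · exact key y x z hy hx hz hy2 hx2 (by rwa [Int.gcd_comm]) (by linear_combination heq) ih'
    · exact key x y z hx hy hz hx2 hy2 hg1 heq ih'
    · exact case_odd_odd hx2 hy2 heq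
  · -- non-coprime : divide through and descend
    obtain ⟨x1, hx1⟩ : (↑(Int.gcd x y) : ℤ) ∣ x := Int.gcd_dvd_left x y
    obtain ⟨y1, hy1⟩ : (↑(Int.gcd x y) : ℤ) ∣ y := Int.gcd_dvd_right x y
    have hgpos : 0 < Int.gcd x y := Int.gcd_pos_iff.mpr (Or.inl (ne_of_gt hx))
    have hg2 : 2 ≤ Int.gcd x y := by omega
    have hgz : (2:ℤ) ≤ (Int.gcd x y : ℤ) := by exact_mod_cast hg2
    have hdvd : (((Int.gcd x y : ℤ))^2)^2 ∣ z^2 :=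
      ⟨x1^4 + 18*x1^2*y1^2 + y1^4, by
        linear_combination -heq + (x^3 + x^2*(Int.gcd x y*x1) + x*(Int.gcd x y*x1)^2 +
          (Int.gcd x y*x1)^3 + 18*x*y^2 + 18*(Int.gcd x y*x1)*y^2)*hx1 +
          (18*(Int.gcd x y*x1)^2*(y + Int.gcd x y*y1) + y^3 + y^2*(Int.gcd x y*y1) +
          y*(Int.gcd x y*y1)^2 + (Int.gcd x y*y1)^3)*hy1⟩
    have hdz : ((Int.gcd x y : ℤ))^2 ∣ z := (Int.pow_dvd_pow_iff two_ne_zero).mp hdvd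
    obtain ⟨z1, hz1⟩ := hdz
    have hx1p : 0 < x1 := by
      rcases le_or_gt x1 0 with h0 | h0
      · exfalso
        have : (Int.gcd x y : ℤ) * x1 ≤ 0 :=
          mul_nonpos_of_nonneg_of_nonpos (by linarith) h0
        omega
      · exact h0
    have hy1p : 0 < y1 := by
      rcases le_or_gt y1 0 with h0 | h0
      · exfalso
        have : (Int.gcd x y : ℤ) * y1 ≤ 0 :=
          mul_nonpos_of_nonneg_of_nonpos (by linarith) h0
        omega
      · exact h0
    have hz1p : 0 < z1 := by
      rcases le_or_gt z1 0 with h0 | h0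
      · exfalso
        have : ((Int.gcd x y : ℤ))^2 * z1 ≤ 0 :=
          mul_nonpos_of_nonneg_of_nonpos (by positivity) h0
        omega
      · exact h0
    have heq1 : x1^4 + 18*x1^2*y1^2 + y1^4 = z1^2 := by
      have h' : ((Int.gcd x y : ℤ))^4 * (x1^4 + 18*x1^2*y1^2 + y1^4) =
          ((Int.gcd x y : ℤ))^4 * z1^2 := by
        linear_combination heq - (x^3 + x^2*(Int.gcd x y*x1) + x*(Int.gcd x y*x1)^2 +
          (Int.gcd x y*x1)^3 + 18*x*y^2 + 18*(Int.gcd x y*x1)*y^2)*hx1 -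
          (18*(Int.gcd x y*x1)^2*(y + Int.gcd x y*y1) + y^3 + y^2*(Int.gcd x y*y1) +
          y*(Int.gcd x y*y1)^2 + (Int.gcd x y*y1)^3)*hy1 +
          (z + (Int.gcd x y : ℤ)^2*z1)*hz1
      exact mul_left_cancel₀ (by positivity) h'
    have hlt : z1.natAbs < z.natAbs := by
      have h4 : (4:ℤ) ≤ ((Int.gcd x y : ℤ))^2 := by
        rw [pow_two]
        have := mul_le_mul hgz hgz (by norm_num) (by linarith)
        linarith
      have : z1 < z := by
        rw [hz1]
        exact lt_mul_of_one_lt_left hz1p (by linarith)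
      omega
    exact ih' x1 y1 z1 hlt hx1p hy1p hz1p heq1

/-- Pocklington's lemma: if `x` and `y` are nonzero integers, then
`x^4 + 18x^2y^2 + y^4` is not a perfect square. -/
theorem pocklington (x y : ℤ) (hx : x ≠ 0) (hy : y ≠ 0) :
    ¬ ∃ z : ℤ, x ^ 4 + 18 * x ^ 2 * y ^ 2 + y ^ 4 = z ^ 2 := by
  rintro ⟨z, hz⟩
  have hpos : 0 < x ^ 4 + 18 * x ^ 2 * y ^ 2 + y ^ 4 := by positivity
  have hz0 : z ≠ 0 := by rintro rfl; simp at hz; omega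
  have e1 : |x|^4 = x^4 := by rw [pow_abs]; exact abs_of_nonneg (by positivity)
  have e2 : |y|^4 = y^4 := by rw [pow_abs]; exact abs_of_nonneg (by positivity)
  exact pock_aux (|z|).natAbs |x| |y| |z| rfl (abs_pos.mpr hx) (abs_pos.mpr hy)
    (abs_pos.mpr hz0) (by rw [e1, e2, sq_abs, sq_abs, sq_abs]; exact hz)
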